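/- arXiv:1305.4165 — 4 statements merged into one kernel-verified Lean document; each statement's English description precedes it below -/
import Mathlib

section
/- If the chain maps f : V → W and f̃ : Ṽ → W are quasi-isomorphisms, then the canonical projection π_Ṽ : Cyl(f, f̃) → Ṽ, π_Ṽ(v + s w + ṽ) = ṽ, is a quasi-isomorphism of cochain complexes. -/
/-- An (unbounded) cochain complex of `K`-vector spaces.  The differential is
indexed by pairs of consecutive degrees (`i`, `j` with `i + 1 = j`) to avoid
dependent-type rewriting along equalities of degrees. -/
structure Cochain (K : Type) [Field K] where
  X : ℤ → Type
  [ab : ∀ n : ℤ, AddCommGroup (X n)]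
  [mod : ∀ n : ℤ, Module K (X n)]
  d : ∀ (i j : ℤ), i + 1 = j → (X i →ₗ[K] X j)
  dd : ∀ (i j k : ℤ) (hij : i + 1 = j) (hjk : j + 1 = k) (x : X i),
      d j k hjk (d i j hij x) = 0

attribute [instance] Cochain.ab Cochain.mod

/-- A chain map of cochain complexes of `K`-vector spaces. -/
structure ChainMap (K : Type) [Field K] (V W : Cochain K) where
  f : ∀ n : ℤ, V.X n →ₗ[K] W.X n
  comm : ∀ (i j : ℤ) (h : i + 1 = j) (x : V.X i),
      f j (V.d i j h x) = W.d i j h (f i x)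

/-- `φ` is a quasi-isomorphism: it induces an isomorphism on cohomology in every
degree, i.e. the induced map on cohomology classes is surjective (every cocycle
of the target is, up to a coboundary, the image of a cocycle) and injective
(a cocycle mapping to a coboundary is a coboundary). -/
def IsQuasiIso {K : Type} [Field K] {V W : Cochain K} (φ : ChainMap K V W) : Prop :=
  (∀ (n : ℤ) (y : W.X n), W.d n (n + 1) rfl y = 0 →
      ∃ (x : V.X n) (z : W.X (n - 1)),
        V.d n (n + 1) rfl x = 0 ∧
        φ.f n x = y + W.d (n - 1) n (by omega) z) ∧
  (∀ (n : ℤ) (x : V.X n), V.d n (n + 1) rfl x = 0 →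
      (∃ z : W.X (n - 1), φ.f n x = W.d (n - 1) n (by omega) z) →
      ∃ u : V.X (n - 1), x = V.d (n - 1) n (by omega) u)

/-- Transport along an equality of degrees. -/
def Cochain.cast {K : Type} [Field K] (V : Cochain K) {i j : ℤ} (h : i = j) :
    V.X i →ₗ[K] V.X j := by subst h; exact LinearMap.id

/-- The degree `n` component of the cylinder `Cyl(f, f̃) = V ⊕ sW ⊕ Ṽ`,
namely `V^n × W^(n-1) × Ṽ^n`  (recall `(sW)^n = W^(n-1)`). -/
abbrev CylX {K : Type} [Field K] (V W Vt : Cochain K) (n : ℤ) : Type :=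
  V.X n × W.X (n - 1) × Vt.X n

/-- The cylinder differential `∂^Cyl (v + s w + ṽ) = ∂v + s (f v - ∂w + f̃ ṽ) + ∂ṽ`. -/
def cylD {K : Type} [Field K] {V W Vt : Cochain K}
    (f : ChainMap K V W) (ft : ChainMap K Vt W)
    (i j : ℤ) (h : i + 1 = j) : CylX V W Vt i → CylX V W Vt j :=
  fun p =>
    (V.d i j h p.1,
     W.cast (show i = j - 1 by omega) (f.f i p.1)
       - W.d (i - 1) (j - 1) (by omega) p.2.1
       + W.cast (show i = j - 1 by omega) (ft.f i p.2.2),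
     Vt.d i j h p.2.2)

lemma cast_d' {K : Type} [Field K] (V : Cochain K) {i j j' : ℤ}
    (hij : i + 1 = j) (h : j = j') (hij' : i + 1 = j') (x : V.X i) :
    V.cast h (V.d i j hij x) = V.d i j' hij' x := by
  subst h; rfl

lemma cast_inj' {K : Type} [Field K] (V : Cochain K) {i j : ℤ} (h : i = j)
    {x y : V.X i} (hxy : V.cast h x = V.cast h y) : x = y := by
  subst h; exact hxy

lemma cast_rfl' {K : Type} [Field K] (V : Cochain K) {i : ℤ} (h : i = i)
    (x : V.X i) : V.cast h x = x := rfl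

/-- If `f : V → W` and `f̃ : Ṽ → W` are quasi-isomorphisms, then the canonical
projection `π_Ṽ : Cyl(f, f̃) → Ṽ`, `π_Ṽ (v + s w + ṽ) = ṽ`, is a
quasi-isomorphism: it induces an isomorphism on cohomology in every degree
(surjectivity and injectivity on cohomology classes). -/
theorem cylinder_projection_Vt_quasiIso {K : Type} [Field K] [CharZero K]
    {V W Vt : Cochain K} (f : ChainMap K V W) (ft : ChainMap K Vt W)
    (hf : IsQuasiIso f) (hft : IsQuasiIso ft) :
    (∀ (n : ℤ) (vt : Vt.X n), Vt.d n (n + 1) rfl vt = 0 →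
        ∃ (z : CylX V W Vt n) (u : Vt.X (n - 1)),
          cylD f ft n (n + 1) rfl z = 0 ∧
          z.2.2 = vt + Vt.d (n - 1) n (by omega) u) ∧
    (∀ (n : ℤ) (z : CylX V W Vt n), cylD f ft n (n + 1) rfl z = 0 →
        (∃ u : Vt.X (n - 1), z.2.2 = Vt.d (n - 1) n (by omega) u) →
        ∃ y : CylX V W Vt (n - 1), z = cylD f ft (n - 1) n (by omega) y) := by
  constructor
  · -- surjectivity on cohomology
    intro n vt hvt
    have hy : W.d n (n + 1) rfl (-(ft.f n vt)) = 0 := by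
      rw [map_neg, ← ft.comm n (n + 1) rfl vt, hvt, map_zero, neg_zero]
    obtain ⟨x, z, hx, hfx⟩ := hf.1 n (-(ft.f n vt)) hy
    refine ⟨(x, z, vt), 0, ?_, by rw [map_zero, add_zero]⟩
    show (_, _, _) = ((0 : V.X (n+1)), (0 : W.X (n+1-1)), (0 : Vt.X (n+1)))
    refine Prod.ext hx (Prod.ext ?_ hvt)
    show W.cast (show n = n + 1 - 1 by omega) (f.f n x)
        - W.d (n - 1) (n + 1 - 1) (by omega) z
        + W.cast (show n = n + 1 - 1 by omega) (ft.f n vt) = 0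
    rw [hfx, map_add, map_neg,
      cast_d' W (show n - 1 + 1 = n by omega) (show n = n + 1 - 1 by omega)
        (by omega) z]
    abel
  · -- injectivity on cohomology
    intro n z hz ⟨u, hu⟩
    obtain ⟨v, w, vt⟩ := z
    have hz1 : V.d n (n + 1) rfl v = 0 := congrArg Prod.fst hz
    have hz2 : W.cast (show n = n + 1 - 1 by omega) (f.f n v)
        - W.d (n - 1) (n + 1 - 1) (by omega) w
        + W.cast (show n = n + 1 - 1 by omega) (ft.f n vt) = 0 :=
      congrArg (fun p => p.2.1) hz
    simp only at hu
    -- f v = d (w - f̃ u)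
    have hfv : f.f n v = W.d (n - 1) n (by omega) (w - ft.f (n - 1) u) := by
      apply cast_inj' W (show n = n + 1 - 1 by omega)
      rw [cast_d' W (show n - 1 + 1 = n by omega) (show n = n + 1 - 1 by omega)
        (by omega)]
      have h3 : W.cast (show n = n + 1 - 1 by omega) (ft.f n vt)
          = W.d (n - 1) (n + 1 - 1) (by omega) (ft.f (n - 1) u) := by
        rw [hu, ft.comm (n - 1) n (by omega) u,
          ← cast_d' W (show n - 1 + 1 = n by omega) (show n = n + 1 - 1 by omega)
            (by omega)]
      rw [map_sub]
      have := hz2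
      rw [h3] at this
      linear_combination (norm := module) this
    obtain ⟨uV, huV⟩ := hf.2 n v hz1 ⟨w - ft.f (n - 1) u, hfv⟩
    -- y0 is a cocycle
    set y0 : W.X (n - 1) := w - f.f (n - 1) uV - ft.f (n - 1) u with hy0
    have hdy0 : W.d (n - 1) n (by omega) y0 = 0 := by
      have hfv' : f.f n v = W.d (n - 1) n (by omega) (f.f (n - 1) uV) := by
        rw [huV, f.comm (n - 1) n (by omega) uV]
      rw [hy0, map_sub, map_sub, ← hfv', hfv, map_sub]
      abel
    have hdy0' : W.d (n - 1) (n - 1 + 1) rfl y0 = 0 := by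
      apply cast_inj' W (show n - 1 + 1 = n by omega)
      rw [cast_d' W rfl (show n - 1 + 1 = n by omega) (by omega), hdy0, map_zero]
    obtain ⟨c, z', hc, hfc⟩ := hf.1 (n - 1) y0 hdy0'
    refine ⟨(uV + c, z', u), ?_⟩
    have hdc : V.d (n - 1) n (by omega) c = 0 := by
      rw [← cast_d' V rfl (show n - 1 + 1 = n by omega) (by omega), hc, map_zero]
    refine Prod.ext ?_ (Prod.ext ?_ ?_)
    · show v = V.d (n - 1) n (by omega) (uV + c)
      rw [map_add, hdc, add_zero, huV]
    · show w = W.cast (show n - 1 = n - 1 by omega) (f.f (n - 1) (uV + c))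
          - W.d (n - 1 - 1) (n - 1) (by omega) z'
          + W.cast (show n - 1 = n - 1 by omega) (ft.f (n - 1) u)
      rw [cast_rfl', cast_rfl', map_add, hfc, hy0]
      abel
    · show vt = Vt.d (n - 1) n (by omega) u
      exact hu
end

section
/- Suppose f : V → W and f̃ : Ṽ → W are quasi-isomorphisms. If v + s w + ṽ is a cocycle in Cyl(f, f̃) (i.e. ∂^Cyl(v + s w + ṽ) = 0) and v is exact in V (i.e. v = ∂v₁ for some v₁ ∈ V), then ṽ is exact in Ṽ. -/
lemma Cochain.cast_cast {K : Type} [Field K] (V : Cochain K) {i j : ℤ}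
    (h : i = j) (h' : j = i) (x : V.X i) : V.cast h' (V.cast h x) = x := by
  subst h; rfl

lemma Cochain.d_cast {K : Type} [Field K] (V : Cochain K) {i j j' : ℤ}
    (hj : j = j') (h : i + 1 = j) (h' : i + 1 = j') (x : V.X i) :
    V.cast hj (V.d i j h x) = V.d i j' h' x := by
  subst hj; rfl

/-- If `f` and `f̃` are quasi-isomorphisms, `v + s w + ṽ` is a cocycle in
`Cyl(f, f̃)` and `v` is exact in `V`, then `ṽ` is exact in `Ṽ`. -/
theorem cylinder_cocycle_exact_component {K : Type} [Field K] [CharZero K]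
    {V W Vt : Cochain K} (f : ChainMap K V W) (ft : ChainMap K Vt W)
    (hf : IsQuasiIso f) (hft : IsQuasiIso ft)
    (n : ℤ) (v : V.X n) (w : W.X (n - 1)) (vt : Vt.X n)
    (hz : cylD f ft n (n + 1) rfl (v, w, vt) = 0)
    (hv : ∃ v₁ : V.X (n - 1), v = V.d (n - 1) n (by omega) v₁) :
    ∃ u : Vt.X (n - 1), vt = Vt.d (n - 1) n (by omega) u := by
  obtain ⟨v₁, hv₁⟩ := hv
  have h3 : Vt.d n (n + 1) rfl vt = 0 := congrArg (fun p => p.2.2) hz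
  have e : (n + 1 - 1 : ℤ) = n := by omega
  have h2 : W.cast (show n = n + 1 - 1 by omega) (f.f n v)
      - W.d (n - 1) (n + 1 - 1) (by omega) w
      + W.cast (show n = n + 1 - 1 by omega) (ft.f n vt) = 0 :=
    congrArg (fun p => p.2.1) hz
  have h2' := congrArg (W.cast e) h2
  rw [map_add, map_sub, map_zero, W.cast_cast, W.cast_cast,
      W.d_cast (h' := by omega)] at h2'
  have key : ft.f n vt = W.d (n - 1) n (by omega) (w - f.f (n - 1) v₁) := by
    rw [map_sub, ← f.comm (n - 1) n (by omega) v₁, ← hv₁]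
    -- h2' : f.f n v - W.d (n-1) n _ w + ft.f n vt = 0
    rw [add_comm, ← eq_neg_iff_add_eq_zero] at h2'
    rw [h2', neg_sub]
  exact hft.2 n vt h3 ⟨w - f.f (n - 1) v₁, key⟩
end

section
/- Suppose f : V → W and f̃ : Ṽ → W are quasi-isomorphisms. If z = v + s w + ṽ is a cocycle in Cyl(f, f̃) such that v is exact in V, then z is a coboundary in Cyl(f, f̃), i.e. z = ∂^Cyl(y) for some y ∈ Cyl(f, f̃). In other words, π_V is injective on cohomology. -/
namespace Cochain
variable {K : Type} [Field K] (V : Cochain K)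

lemma cast_cast_s7 {i j k : ℤ} (e : i = j) (e' : j = k) (x : V.X i) :
    V.cast e' (V.cast e x) = V.cast (e.trans e') x := by subst e; subst e'; rfl

lemma cast_refl {i : ℤ} (e : i = i) (x : V.X i) : V.cast e x = x := rfl

lemma cast_d {i j j' : ℤ} (h : i + 1 = j) (h' : i + 1 = j') (e : j = j')
    (x : V.X i) : V.cast e (V.d i j h x) = V.d i j' h' x := by subst e; rfl

lemma cast_inj {i j : ℤ} (e : i = j) {x y : V.X i}
    (h : V.cast e x = V.cast e y) : x = y := by subst e; exact h

end Cochain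

/-- If `f` and `f̃` are quasi-isomorphisms and `z = v + s w + ṽ` is a cocycle in
`Cyl(f, f̃)` whose component `v` is exact in `V`, then `z` is a coboundary in
`Cyl(f, f̃)`; in other words `π_V` is injective on cohomology. -/
theorem cylinder_projection_V_injective_on_cohomology {K : Type} [Field K] [CharZero K]
    {V W Vt : Cochain K} (f : ChainMap K V W) (ft : ChainMap K Vt W)
    (hf : IsQuasiIso f) (hft : IsQuasiIso ft)
    (n : ℤ) (z : CylX V W Vt n)
    (hz : cylD f ft n (n + 1) rfl z = 0)
    (hv : ∃ v₁ : V.X (n - 1), z.1 = V.d (n - 1) n (by omega) v₁) :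
    ∃ y : CylX V W Vt (n - 1), z = cylD f ft (n - 1) n (by omega) y :=  by
  obtain ⟨v₁, hv₁⟩ := hv
  have h1 : Vt.d n (n + 1) rfl z.2.2 = 0 := congrArg (fun p => p.2.2) hz
  have h2 : W.cast (show n = n + 1 - 1 by omega) (f.f n z.1)
      - W.d (n - 1) (n + 1 - 1) (by omega) z.2.1
      + W.cast (show n = n + 1 - 1 by omega) (ft.f n z.2.2) = 0 :=
    congrArg (fun p => p.2.1) hz
  -- move h2 to degree n
  have h2' : f.f n z.1 - W.d (n - 1) n (by omega) z.2.1 + ft.f n z.2.2 = 0 := by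
    apply W.cast_inj (show n = n + 1 - 1 by omega)
    rw [map_add, map_sub, Cochain.cast_d W (by omega) (by omega) (by omega : n = n + 1 - 1),
      map_zero]
    exact h2
  -- f̃ ṽ is a coboundary, hence ṽ is a coboundary
  have hftv : ft.f n z.2.2 = W.d (n - 1) n (by omega) (z.2.1 - f.f (n - 1) v₁) := by
    rw [map_sub]
    have hc : W.d (n - 1) n (by omega) (f.f (n - 1) v₁) = f.f n z.1 := by
      rw [← f.comm (n - 1) n (by omega) v₁, ← hv₁]
    rw [hc]
    linear_combination (norm := abel) h2' 
  obtain ⟨u, hu⟩ := hft.2 n z.2.2 h1 ⟨_, hftv⟩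
  -- the cocycle ω in degree n-1
  set ω : W.X (n - 1) := f.f (n - 1) v₁ + ft.f (n - 1) u - z.2.1 with hω
  have hdω : W.d (n - 1) n (by omega) ω = 0 := by
    rw [hω, map_sub, map_add, ← f.comm (n - 1) n (by omega) v₁,
      ← ft.comm (n - 1) n (by omega) u, ← hv₁, ← hu]
    have := h2'
    linear_combination (norm := abel) this
  have hdω' : W.d (n - 1) (n - 1 + 1) rfl ω = 0 := by
    rw [← Cochain.cast_d W (show n - 1 + 1 = n by omega) rfl (show n = n - 1 + 1 by omega) ω,
      hdω, map_zero]
  obtain ⟨x, zz, hx, hfx⟩ := hf.1 (n - 1) ω hdω'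
  have hx' : V.d (n - 1) n (by omega) x = 0 := by
    rw [← Cochain.cast_d V rfl (show (n-1) + 1 = n by omega) (show n - 1 + 1 = n by omega) x,
      hx, map_zero]
  refine ⟨(v₁ - x, -zz, u), ?_⟩
  have e1 : z.1 = V.d (n - 1) n (by omega) (v₁ - x) := by
    rw [map_sub, hx', sub_zero, hv₁]
  have e3 : z.2.2 = Vt.d (n - 1) n (by omega) u := hu
  have e2 : z.2.1 = W.cast (show n - 1 = n - 1 by omega) (f.f (n - 1) (v₁ - x))
      - W.d (n - 1 - 1) (n - 1) (by omega) (-zz)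
      + W.cast (show n - 1 = n - 1 by omega) (ft.f (n - 1) u) := by
    rw [Cochain.cast_refl, Cochain.cast_refl, map_sub, hfx, map_neg, hω]
    abel
  show z = (_, _, _)
  rw [Prod.ext_iff, Prod.ext_iff]
  exact ⟨e1, e2, e3⟩
end

section
/- Let φ : V → V′ be a quasi-isomorphism of cochain complexes of K-vector spaces and let U be any cochain complex of K-vector spaces. Then the induced chain map Hom(U, φ) : Hom(U, V) → Hom(U, V′), given by postcomposition with φ, is a quasi-isomorphism of Hom-complexes. -/
/-- The index set of the degree `n` part of the Hom-complex: pairs `(p, q)`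
with `p + n = q`. -/
abbrev HIdx (n : ℤ) : Type := {pq : ℤ × ℤ // pq.1 + n = pq.2}

/-- The degree `n` component of the Hom-complex `Hom(U, V)`:
`Hom(U, V)^n = ∏_p Hom_K (U^p, V^(p+n))`; the target degree `q = p + n` is
recorded in the index to avoid dependent rewriting. -/
abbrev HX {K : Type} [Field K] (U V : Cochain K) (n : ℤ) : Type :=
  ∀ i : HIdx n, (U.X i.1.1 →ₗ[K] V.X i.1.2)

/-- The differential of the Hom-complex: `d φ = ∂_V ∘ φ - (-1)^m φ ∘ ∂_U` for
`φ` of degree `m`. -/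
noncomputable def homD {K : Type} [Field K] (U V : Cochain K) (m n : ℤ)
    (h : m + 1 = n) : HX U V m → HX U V n :=
  fun φ i =>
    (V.d (i.1.2 - 1) i.1.2 (by omega)).comp
        (φ ⟨(i.1.1, i.1.2 - 1), show i.1.1 + m = i.1.2 - 1 by
          have := i.2; omega⟩)
      - (-1 : K) ^ m •
        ((φ ⟨(i.1.1 + 1, i.1.2), show i.1.1 + 1 + m = i.1.2 by
          have := i.2; omega⟩).comp (U.d i.1.1 (i.1.1 + 1) rfl))

/-- Postcomposition with `φ`: the induced map `Hom(U, φ) : Hom(U, V) → Hom(U, V')`. -/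
def homMapPost {K : Type} [Field K] {V V' : Cochain K} (φ : ChainMap K V V')
    (U : Cochain K) (n : ℤ) : HX U V n → HX U V' n :=
  fun ψ i => (φ.f i.1.2).comp (ψ i)


section Aux
variable {K : Type} [Field K]

/-- Cast along an equality of degrees. -/
def castL {F : ℤ → Type} [∀ n, AddCommGroup (F n)] [∀ n, Module K (F n)]
    {i j : ℤ} (h : i = j) : F i ≃ₗ[K] F j := by subst h; exact LinearEquiv.refl K (F i)

@[simp] theorem castL_rfl {F : ℤ → Type} [∀ n, AddCommGroup (F n)] [∀ n, Module K (F n)]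
    {i : ℤ} (h : i = i) (x : F i) : castL (K := K) (F := F) h x = x := rfl

@[simp] theorem castL_castL {F : ℤ → Type} [∀ n, AddCommGroup (F n)] [∀ n, Module K (F n)]
    {i j k : ℤ} (h1 : i = j) (h2 : j = k) (x : F i) :
    castL (K := K) (F := F) h2 (castL (K := K) (F := F) h1 x) =
      castL (K := K) (F := F) (h1.trans h2) x := by subst h1; subst h2; rfl

theorem d_cast (W : Cochain K) {i i' j : ℤ} (hi : i = i') (h : i + 1 = j) (h' : i' + 1 = j)
    (x : W.X i) : W.d i' j h' (castL (K := K) (F := W.X) hi x) = W.d i j h x := by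
  subst hi; rfl

theorem f_cast {V W : Cochain K} (φ : ChainMap K V W) {i i' : ℤ} (hi : i = i')
    (x : V.X i) : φ.f i' (castL (K := K) (F := V.X) hi x) =
      castL (K := K) (F := W.X) hi (φ.f i x) := by subst hi; rfl

end Aux

section Cone
variable {K : Type} [Field K] {V V' : Cochain K}

/-- The mapping cone of a chain map. -/
noncomputable def cone (φ : ChainMap K V V') : Cochain K where
  X n := V.X (n + 1) × V'.X n
  d i j h := LinearMap.prod
      ((-(V.d (i + 1) (j + 1) (by omega))).comp (LinearMap.fst K (V.X (i + 1)) (V'.X i)))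
      (((castL (K := K) (F := V'.X) h).toLinearMap.comp
          ((φ.f (i + 1)).comp (LinearMap.fst K (V.X (i + 1)) (V'.X i))))
        + (V'.d i j h).comp (LinearMap.snd K (V.X (i + 1)) (V'.X i)))
  dd := by
    intro i j k hij hjk x
    subst hij; subst hjk
    obtain ⟨v, w⟩ := x
    simp only [LinearMap.prod_apply, Function.prod, LinearMap.comp_apply, LinearMap.fst_apply,
      LinearMap.snd_apply, LinearMap.neg_apply, LinearMap.add_apply, LinearEquiv.coe_coe,
      castL_rfl, map_neg]
    refine Prod.ext ?_ ?_
    · show - -(V.d _ _ _) ((V.d _ _ _) v) = 0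
      rw [V.dd _ _ _ _ _ v]; exact neg_neg 0 |>.trans rfl
    · show -(φ.f _) ((V.d _ _ _) v) + (V'.d _ _ _) ((φ.f _) v + (V'.d _ _ _) w) = 0
      rw [map_add, V'.dd _ _ _ _ _ w, add_zero, φ.comm]
      exact neg_add_cancel _

end Cone

section Contraction
variable {K : Type} [Field K]

theorem exists_contraction (C : Cochain K)
    (hC : ∀ (i j : ℤ) (h : i + 1 = j) (y : C.X j), C.d j (j + 1) rfl y = 0 →
        ∃ x, C.d i j h x = y) :
    ∃ s : ∀ i j : ℤ, i + 1 = j → (C.X j →ₗ[K] C.X i),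
      ∀ (i j k : ℤ) (hij : i + 1 = j) (hjk : j + 1 = k) (x : C.X j),
        C.d i j hij (s i j hij x) + s j k hjk (C.d j k hjk x) = x := by
  set Z : ∀ n : ℤ, Submodule K (C.X n) := fun n => LinearMap.ker (C.d n (n + 1) rfl) with hZ
  have hWex : ∀ n : ℤ, ∃ W, IsCompl (Z n) W := fun n => Submodule.exists_isCompl (Z n)
  choose W hW using hWex
  have hdmem : ∀ (i j : ℤ) (h : i + 1 = j) (x : C.X i), C.d i j h x ∈ Z j := by
    intro i j h x
    exact LinearMap.mem_ker.mpr (C.dd i j (j + 1) h rfl x)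
  set dW : ∀ (i j : ℤ), i + 1 = j → ((W i) →ₗ[K] (Z j)) := fun i j h =>
    LinearMap.codRestrict (Z j) ((C.d i j h).comp (W i).subtype)
      (fun x => hdmem i j h x.1) with hdW
  have hinj : ∀ (i j : ℤ) (h : i + 1 = j), Function.Injective (dW i j h) := by
    intro i j h
    subst h
    intro x y hxy
    have hmem : (x : C.X i) - y ∈ Z i := by
      refine LinearMap.mem_ker.mpr ?_
      have : C.d i (i + 1) rfl ((x : C.X i) - y) = 0 := by
        have := congrArg Subtype.val hxy
        simp only [hdW, LinearMap.codRestrict_apply, LinearMap.comp_apply,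
          Submodule.subtype_apply] at this
        rw [map_sub]; exact sub_eq_zero.mpr this
      exact this
    have hmemW : (x : C.X i) - y ∈ W i := sub_mem x.2 y.2
    have := Submodule.disjoint_def.mp (hW i).disjoint _ hmem hmemW
    exact Subtype.ext (sub_eq_zero.mp this)
  have hsurj : ∀ (i j : ℤ) (h : i + 1 = j), Function.Surjective (dW i j h) := by
    intro i j h
    subst h
    intro z
    obtain ⟨x, hx⟩ := hC i (i + 1) rfl z.1 (LinearMap.mem_ker.mp z.2)
    refine ⟨Submodule.projectionOnto (W i) (Z i) (hW i).symm x, ?_⟩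
    refine Subtype.ext ?_
    show C.d i (i + 1) rfl ((Submodule.projectionOnto (W i) (Z i) (hW i).symm x : C.X i)) = z.1
    have hsplit : ((Submodule.projectionOnto (Z i) (W i) (hW i) x : C.X i)) + (Submodule.projectionOnto (W i) (Z i) (hW i).symm x : C.X i) = x :=
      Submodule.projection_add_projection_eq_self (hW i) x
    have hker : C.d i (i + 1) rfl ((Submodule.projectionOnto (Z i) (W i) (hW i) x : C.X i)) = 0 :=
      LinearMap.mem_ker.mp (Submodule.projectionOnto (Z i) (W i) (hW i) x).2
    calc C.d i (i + 1) rfl ((Submodule.projectionOnto (W i) (Z i) (hW i).symm x : C.X i))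
        = C.d i (i + 1) rfl ((Submodule.projectionOnto (Z i) (W i) (hW i) x : C.X i))
          + C.d i (i + 1) rfl ((Submodule.projectionOnto (W i) (Z i) (hW i).symm x : C.X i)) := by
          rw [hker, zero_add]
      _ = C.d i (i + 1) rfl x := by rw [← map_add, hsplit]
      _ = z.1 := hx
  set e : ∀ (i j : ℤ), i + 1 = j → ((W i) ≃ₗ[K] (Z j)) := fun i j h =>
    LinearEquiv.ofBijective (dW i j h) ⟨hinj i j h, hsurj i j h⟩ with he
  refine ⟨fun i j h => (W i).subtype ∘ₗ (e i j h).symm.toLinearMap ∘ₗ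
      Submodule.projectionOnto (Z j) (W j) (hW j), ?_⟩
  intro i j k hij hjk x
  subst hij; subst hjk
  simp only [LinearMap.comp_apply, Submodule.subtype_apply, LinearEquiv.coe_coe]
  -- first term
  have h1 : C.d i (i + 1) rfl
      ((((e i (i + 1) rfl).symm (Submodule.projectionOnto (Z (i+1)) (W (i+1)) (hW (i+1)) x)) : C.X i))
      = ((Submodule.projectionOnto (Z (i+1)) (W (i+1)) (hW (i+1)) x : C.X (i+1))) := by
    have := (e i (i + 1) rfl).apply_symm_apply
      (Submodule.projectionOnto (Z (i+1)) (W (i+1)) (hW (i+1)) x)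
    exact congrArg Subtype.val this
  -- second term
  have hmem2 : C.d (i+1) (i+1+1) rfl x ∈ Z (i+1+1) := hdmem _ _ _ x
  have hproj2 : Submodule.projectionOnto (Z (i+1+1)) (W (i+1+1)) (hW (i+1+1))
      (C.d (i+1) (i+1+1) rfl x) = ⟨C.d (i+1) (i+1+1) rfl x, hmem2⟩ :=
    Submodule.projectionOnto_apply_left (hW (i+1+1)) ⟨_, hmem2⟩
  have h2 : (e (i+1) (i+1+1) rfl).symm ⟨C.d (i+1) (i+1+1) rfl x, hmem2⟩
      = Submodule.projectionOnto (W (i+1)) (Z (i+1)) (hW (i+1)).symm x := by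
    rw [LinearEquiv.symm_apply_eq]
    refine (Subtype.ext ?_).symm
    show C.d (i+1) (i+1+1) rfl
        ((Submodule.projectionOnto (W (i+1)) (Z (i+1)) (hW (i+1)).symm x : C.X (i+1)))
      = C.d (i+1) (i+1+1) rfl x
    have hsplit : ((Submodule.projectionOnto (Z (i+1)) (W (i+1)) (hW (i+1)) x : C.X (i+1))) + (Submodule.projectionOnto (W (i+1)) (Z (i+1)) (hW (i+1)).symm x : C.X (i+1)) = x :=
      Submodule.projection_add_projection_eq_self (hW (i+1)) x
    have hker : C.d (i+1) (i+1+1) rfl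
        ((Submodule.projectionOnto (Z (i+1)) (W (i+1)) (hW (i+1)) x : C.X (i+1))) = 0 :=
      LinearMap.mem_ker.mp (Submodule.projectionOnto (Z (i+1)) (W (i+1)) (hW (i+1)) x).2
    conv_rhs => rw [← hsplit]
    rw [map_add, hker, zero_add]
  rw [h1, hproj2, h2]
  exact Submodule.projection_add_projection_eq_self (hW (i+1)) x

section ConeAcyclic
variable {K : Type} [Field K] {V V' : Cochain K}

theorem cone_acyclic (φ : ChainMap K V V') (hφ : IsQuasiIso φ) :
    ∀ (i j : ℤ) (h : i + 1 = j) (y : (cone φ).X j),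
      (cone φ).d j (j + 1) rfl y = 0 → ∃ x, (cone φ).d i j h x = y := by
  intro i j h y hy
  subst h
  obtain ⟨v, w⟩ := y
  have hy1 := congrArg Prod.fst hy
  have hy2 := congrArg Prod.snd hy
  simp only [cone, LinearMap.prod_apply, Function.prod, LinearMap.comp_apply, LinearMap.fst_apply,
    LinearMap.snd_apply, LinearMap.neg_apply, LinearMap.add_apply, LinearEquiv.coe_coe,
    castL_rfl, Prod.fst_zero, Prod.snd_zero, neg_eq_zero] at hy1 hy2
  -- v is a cocycle, and φ v is a coboundary
  have hv : φ.f (i + 1 + 1) v = V'.d (i + 1 + 1 - 1) (i + 1 + 1) (by omega)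
      (castL (K := K) (F := V'.X) (show i + 1 = i + 1 + 1 - 1 by omega) (-w)) := by
    rw [d_cast V' (show i + 1 = i + 1 + 1 - 1 by omega) rfl, map_neg]
    exact eq_neg_of_add_eq_zero_left hy2
  obtain ⟨u0, hu0⟩ := hφ.2 (i + 1 + 1) v (neg_eq_zero.mp hy1 : V.d (i + 1 + 1) (i + 1 + 1 + 1) rfl v = 0) ⟨_, hv⟩
  set u : V.X (i + 1) := castL (K := K) (F := V.X) (show i + 1 + 1 - 1 = i + 1 by omega) u0
    with hu_def
  have hu : V.d (i + 1) (i + 1 + 1) rfl u = v := by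
    rw [hu_def, d_cast V (show i + 1 + 1 - 1 = i + 1 by omega)
      (show (i + 1 + 1 - 1) + 1 = i + 1 + 1 by omega)]
    exact hu0.symm
  set c : V'.X (i + 1) := w + φ.f (i + 1) u with hc_def
  have hc : V'.d (i + 1) (i + 1 + 1) rfl c = 0 := by
    rw [hc_def, map_add, ← φ.comm (i + 1) (i + 1 + 1) rfl u, hu]
    have : φ.f (i + 1 + 1) v = -(V'.d (i + 1) (i + 1 + 1) rfl w) :=
      eq_neg_of_add_eq_zero_left hy2
    rw [this]
    exact add_neg_cancel _
  obtain ⟨x0, z0, hx0, hxz⟩ := hφ.1 (i + 1) c hc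
  refine ⟨(x0 - u, -(castL (K := K) (F := V'.X) (show i + 1 - 1 = i by omega) z0)), ?_⟩
  show (_, _) = (v, w)
  refine Prod.ext ?_ ?_
  · show -(V.d (i + 1) (i + 1 + 1) (by omega)) (x0 - u) = v
    rw [map_sub]
    rw [show V.d (i + 1) (i + 1 + 1) (by omega) x0 = 0 from hx0]
    rw [show V.d (i + 1) (i + 1 + 1) (by omega) u = v from hu]
    simp
  · show castL (K := K) (F := V'.X) rfl (φ.f (i + 1) (x0 - u))
        + V'.d i (i + 1) rfl (-(castL (K := K) (F := V'.X) (show i + 1 - 1 = i by omega) z0)) = w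
    rw [castL_rfl, map_sub, hxz, map_neg,
      d_cast V' (show i + 1 - 1 = i by omega) (show (i + 1 - 1) + 1 = i + 1 by omega), hc_def]
    abel
end ConeAcyclic

section Extract
variable {K : Type} [Field K] {V V' : Cochain K}

theorem exists_inverse_data (φ : ChainMap K V V') (hφ : IsQuasiIso φ) :
    ∃ (ψ : ∀ n : ℤ, V'.X n →ₗ[K] V.X n)
      (a : ∀ i j : ℤ, i + 1 = j → (V.X j →ₗ[K] V.X i))
      (b : ∀ i j : ℤ, i + 1 = j → (V'.X j →ₗ[K] V'.X i)),
      (∀ (i j : ℤ) (h : i + 1 = j) (y : V'.X i), ψ j (V'.d i j h y) = V.d i j h (ψ i y)) ∧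
      (∀ (i j k : ℤ) (hij : i + 1 = j) (hjk : j + 1 = k) (x : V.X j),
        ψ j (φ.f j x) = x + V.d i j hij (a i j hij x) + a j k hjk (V.d j k hjk x)) ∧
      (∀ (i j k : ℤ) (hij : i + 1 = j) (hjk : j + 1 = k) (y : V'.X j),
        φ.f j (ψ j y) = y + V'.d i j hij (b i j hij y) + b j k hjk (V'.d j k hjk y)) := by
  obtain ⟨s, hs⟩ := exists_contraction (cone φ) (cone_acyclic φ hφ)
  -- congruence helpers for components of s
  have sfst : ∀ (i i' j : ℤ) (hc : i + 1 = i' + 1) (h : i + 1 = j) (h' : i' + 1 = j)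
      (x : (cone φ).X j),
      castL (K := K) (F := V.X) hc ((s i j h x).1) = (s i' j h' x).1 := by
    intro i i' j hc h h' x
    have hi : i = i' := by omega
    subst hi; rfl
  have sargfst : ∀ (i j j' : ℤ) (hj : j = j') (h : i + 1 = j) (h' : i + 1 = j')
      (x : (cone φ).X j) (x' : (cone φ).X j')
      (hx : castL (K := K) (F := (cone φ).X) hj x = x'),
      (s i j h x).1 = (s i j' h' x').1 := by
    intro i j j' hj h h' x x' hx; subst hj; subst hx; rfl
  have cast_inl : ∀ (m m' : ℤ) (hm : m = m') (hm1 : m + 1 = m' + 1)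
      (x : V.X (m + 1)) (x' : V.X (m' + 1)),
      castL (K := K) (F := V.X) hm1 x = x' →
      castL (K := K) (F := (cone φ).X) hm ((LinearMap.inl K (V.X (m + 1)) (V'.X m)) x)
        = (LinearMap.inl K (V.X (m' + 1)) (V'.X m')) x' := by
    intro m m' hm
    subst hm
    intro hm1 x x' hx
    subst hx
    rfl
  have dinr : ∀ (m m' : ℤ) (h : m + 1 = m') (y : V'.X m),
      (cone φ).d m m' h ((LinearMap.inr K (V.X (m + 1)) (V'.X m)) y)
        = (LinearMap.inr K (V.X (m' + 1)) (V'.X m')) (V'.d m m' h y) := by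
    intro m m' h y
    subst h
    refine Prod.ext ?_ ?_
    · show -(V.d (m + 1) (m + 1 + 1) (by omega)) 0 = 0
      simp
    · show castL (K := K) (F := V'.X) rfl (φ.f (m + 1) 0) + V'.d m (m + 1) rfl y
          = V'.d m (m + 1) rfl y
      simp
  have dinl : ∀ (m m' : ℤ) (h : m + 1 = m') (x : V.X (m + 1)),
      (cone φ).d m m' h ((LinearMap.inl K (V.X (m + 1)) (V'.X m)) x)
        = (LinearMap.inl K (V.X (m' + 1)) (V'.X m')) (-(V.d (m + 1) (m' + 1) (by omega) x))
          + (LinearMap.inr K (V.X (m' + 1)) (V'.X m'))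
              (castL (K := K) (F := V'.X) h (φ.f (m + 1) x)) := by
    intro m m' h x
    subst h
    refine Prod.ext ?_ ?_
    · show -(V.d (m + 1) (m + 1 + 1) (by omega)) x
          = -(V.d (m + 1) (m + 1 + 1) (by omega) x) + 0
      simp
    · show castL (K := K) (F := V'.X) rfl (φ.f (m + 1) x) + V'.d m (m + 1) rfl 0
          = 0 + castL (K := K) (F := V'.X) rfl (φ.f (m + 1) x)
      simp
  refine ⟨fun n => (castL (K := K) (F := V.X) (show (n - 1) + 1 = n by omega)).toLinearMap ∘ₗ
      (LinearMap.fst K (V.X ((n - 1) + 1)) (V'.X (n - 1))) ∘ₗ s (n - 1) n (by omega) ∘ₗ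
      (LinearMap.inr K (V.X (n + 1)) (V'.X n)),
    fun i j h => (castL (K := K) (F := V.X) (show (i - 1) + 1 = i by omega)).toLinearMap ∘ₗ
      (LinearMap.fst K (V.X ((i - 1) + 1)) (V'.X (i - 1))) ∘ₗ s (i - 1) (j - 1) (by omega) ∘ₗ
      (LinearMap.inl K (V.X ((j - 1) + 1)) (V'.X (j - 1))) ∘ₗ
      (castL (K := K) (F := V.X) (show j = (j - 1) + 1 by omega)).toLinearMap,
    fun i j h => -((LinearMap.snd K (V.X (i + 1)) (V'.X i)) ∘ₗ s i j h ∘ₗ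
      (LinearMap.inr K (V.X (j + 1)) (V'.X j))), ?_, ?_, ?_⟩
  · -- ψ is a chain map
    intro i j h y
    subst h
    have key := hs (i - 1) i (i + 1) (by omega) rfl
      ((LinearMap.inr K (V.X (i + 1)) (V'.X i)) y)
    have key1 := congrArg Prod.fst key
    have key2 : -(V.d ((i - 1) + 1) (i + 1) (by omega)
          ((s (i - 1) i (by omega) ((LinearMap.inr K (V.X (i + 1)) (V'.X i)) y)).1))
        + ((s i (i + 1) rfl ((cone φ).d i (i + 1) rfl
            ((LinearMap.inr K (V.X (i + 1)) (V'.X i)) y))).1) = 0 := key1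
    have e : (s i (i + 1) rfl ((cone φ).d i (i + 1) rfl
          ((LinearMap.inr K (V.X (i + 1)) (V'.X i)) y))).1
        = (s i (i + 1) rfl ((LinearMap.inr K (V.X (i + 1 + 1)) (V'.X (i + 1)))
            (V'.d i (i + 1) rfl y))).1 :=
      congrArg (fun t => (s i (i + 1) rfl t).1) (dinr i (i + 1) rfl y)
    rw [e] at key2
    refine Eq.trans (sfst (i + 1 - 1) i (i + 1) (by omega) (by omega) rfl _) ?_
    refine Eq.trans ?_ (d_cast V (show (i - 1) + 1 = i by omega) (by omega) rfl _).symm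
    exact (neg_add_eq_zero.mp key2).symm
  · -- ψ ∘ φ homotopic to identity via a
    intro i j k hij hjk x
    subst hjk; subst hij
    have key := hs (i - 1) i (i + 1) (by omega) rfl ((LinearMap.inl K (V.X (i + 1)) (V'.X i)) x)
    have e : (cone φ).d i (i + 1) rfl ((LinearMap.inl K (V.X (i + 1)) (V'.X i)) x)
        = (LinearMap.inl K (V.X (i + 1 + 1)) (V'.X (i + 1)))
            (-(V.d (i + 1) (i + 1 + 1) (by omega) x))
          + (LinearMap.inr K (V.X (i + 1 + 1)) (V'.X (i + 1))) (φ.f (i + 1) x) := by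
      refine (dinl i (i + 1) rfl x).trans ?_
      rw [castL_rfl]
    rw [e] at key
    have key1 := congrArg Prod.fst key
    erw [map_add (s i (i + 1) rfl)] at key1
    simp only [map_add, Prod.fst_add, map_neg, Prod.fst_neg] at key1
    erw [map_neg (s i (i + 1) rfl)] at key1
    have key2 : -(V.d ((i - 1) + 1) (i + 1) (by omega) ((s (i - 1) i (by omega) ((LinearMap.inl K (V.X (i + 1)) (V'.X i)) x)).1)) + (-((s i (i + 1) rfl ((LinearMap.inl K (V.X (i + 1 + 1)) (V'.X (i + 1))) (V.d (i + 1) (i + 1 + 1) rfl x))).1) + ((s i (i + 1) rfl ((LinearMap.inr K (V.X (i + 1 + 1)) (V'.X (i + 1))) (φ.f (i + 1) x))).1)) = x := key1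
    refine Eq.trans (sfst (i + 1 - 1) i (i + 1) (by omega) (by omega) rfl ((LinearMap.inr K (V.X (i + 1 + 1)) (V'.X (i + 1))) (φ.f (i + 1) x))) ?_
    have hmain : ((s i (i + 1) rfl ((LinearMap.inr K (V.X (i + 1 + 1)) (V'.X (i + 1))) (φ.f (i + 1) x))).1) = x + (V.d ((i - 1) + 1) (i + 1) (by omega) ((s (i - 1) i (by omega) ((LinearMap.inl K (V.X (i + 1)) (V'.X i)) x)).1)) + ((s i (i + 1) rfl ((LinearMap.inl K (V.X (i + 1 + 1)) (V'.X (i + 1))) (V.d (i + 1) (i + 1 + 1) rfl x))).1) := by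
      calc ((s i (i + 1) rfl ((LinearMap.inr K (V.X (i + 1 + 1)) (V'.X (i + 1))) (φ.f (i + 1) x))).1) = (-(V.d ((i - 1) + 1) (i + 1) (by omega) ((s (i - 1) i (by omega) ((LinearMap.inl K (V.X (i + 1)) (V'.X i)) x)).1)) + (-((s i (i + 1) rfl ((LinearMap.inl K (V.X (i + 1 + 1)) (V'.X (i + 1))) (V.d (i + 1) (i + 1 + 1) rfl x))).1) + ((s i (i + 1) rfl ((LinearMap.inr K (V.X (i + 1 + 1)) (V'.X (i + 1))) (φ.f (i + 1) x))).1))) + (V.d ((i - 1) + 1) (i + 1) (by omega) ((s (i - 1) i (by omega) ((LinearMap.inl K (V.X (i + 1)) (V'.X i)) x)).1)) + ((s i (i + 1) rfl ((LinearMap.inl K (V.X (i + 1 + 1)) (V'.X (i + 1))) (V.d (i + 1) (i + 1 + 1) rfl x))).1) := by abel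
        _ = x + (V.d ((i - 1) + 1) (i + 1) (by omega) ((s (i - 1) i (by omega) ((LinearMap.inl K (V.X (i + 1)) (V'.X i)) x)).1)) + ((s i (i + 1) rfl ((LinearMap.inl K (V.X (i + 1 + 1)) (V'.X (i + 1))) (V.d (i + 1) (i + 1 + 1) rfl x))).1) := by rw [key2]
    refine hmain.trans ?_
    refine congrArg₂ (· + ·) (congrArg₂ (· + ·) rfl ?_) ?_
    · refine (Eq.trans (d_cast V (show (i - 1) + 1 = i by omega) (by omega) rfl _) ?_).symm
      refine congrArg (V.d ((i - 1) + 1) (i + 1) (by omega)) ?_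
      exact sargfst (i - 1) (i + 1 - 1) i (by omega) (by omega) (by omega) _ _
        (cast_inl (i + 1 - 1) i (by omega) (by omega) _ _
          (by simp only [LinearEquiv.coe_coe, castL_castL, castL_rfl]))
    · refine (Eq.trans (sfst (i + 1 - 1) i (i + 1 + 1 - 1) (by omega) (by omega) (by omega) _) ?_).symm
      exact sargfst i (i + 1 + 1 - 1) (i + 1) (by omega) (by omega) rfl _ _
        (cast_inl (i + 1 + 1 - 1) (i + 1) (by omega) (by omega) _ _
          (by simp only [LinearEquiv.coe_coe, castL_castL, castL_rfl]))
  · -- φ ∘ ψ homotopic to identity via b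
    intro i j k hij hjk y
    subst hjk; subst hij
    have key := hs i (i + 1) (i + 1 + 1) (by omega) rfl ((LinearMap.inr K (V.X (i + 1 + 1)) (V'.X (i + 1))) y)
    rw [dinr (i + 1) (i + 1 + 1) rfl y] at key
    have key1 := congrArg Prod.snd key
    have key2 : ((φ.f (i + 1) ((s i (i + 1) (by omega) ((LinearMap.inr K (V.X (i + 1 + 1)) (V'.X (i + 1))) y)).1)) + (V'.d i (i + 1) (by omega) ((s i (i + 1) (by omega) ((LinearMap.inr K (V.X (i + 1 + 1)) (V'.X (i + 1))) y)).2))) + ((s (i + 1) (i + 1 + 1) rfl ((LinearMap.inr K (V.X (i + 1 + 1 + 1)) (V'.X (i + 1 + 1))) (V'.d (i + 1) (i + 1 + 1) rfl y))).2) = y := key1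
    refine Eq.trans (congrArg (φ.f (i + 1))
      (sfst (i + 1 - 1) i (i + 1) (by omega) (by omega) (by omega) ((LinearMap.inr K (V.X (i + 1 + 1)) (V'.X (i + 1))) y))) ?_
    have h2 := eq_sub_of_add_eq (eq_sub_of_add_eq key2)
    refine h2.trans ?_
    have habel : (y - ((s (i + 1) (i + 1 + 1) rfl ((LinearMap.inr K (V.X (i + 1 + 1 + 1)) (V'.X (i + 1 + 1))) (V'.d (i + 1) (i + 1 + 1) rfl y))).2)) - (V'.d i (i + 1) (by omega) ((s i (i + 1) (by omega) ((LinearMap.inr K (V.X (i + 1 + 1)) (V'.X (i + 1))) y)).2)) = y + (-(V'.d i (i + 1) (by omega) ((s i (i + 1) (by omega) ((LinearMap.inr K (V.X (i + 1 + 1)) (V'.X (i + 1))) y)).2))) + (-((s (i + 1) (i + 1 + 1) rfl ((LinearMap.inr K (V.X (i + 1 + 1 + 1)) (V'.X (i + 1 + 1))) (V'.d (i + 1) (i + 1 + 1) rfl y))).2)) := by abel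
    refine habel.trans ?_
    refine congrArg₂ (· + ·) (congrArg₂ (· + ·) rfl ?_) ?_
    · exact (map_neg (V'.d i (i + 1) (by omega)) _).symm
    · rfl
end Extract

section HomLevel
variable {K : Type} [Field K]

theorem ycast {U W : Cochain K} {n : ℤ} (y : HX U W n) {p q q' : ℤ} (hq : q = q')
    (h1 : p + n = q) (h2 : p + n = q') (u : U.X p) :
    castL (K := K) (F := W.X) hq (y ⟨(p, q), h1⟩ u) = y ⟨(p, q'), h2⟩ u := by
  subst hq; rfl

theorem fam_cast {F G : ℤ → Type} [∀ n, AddCommGroup (F n)] [∀ n, Module K (F n)]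
    [∀ n, AddCommGroup (G n)] [∀ n, Module K (G n)]
    (t : ∀ i j : ℤ, i + 1 = j → (F j →ₗ[K] G i)) {r j j' : ℤ} (hj : j = j')
    (h : r + 1 = j) (h' : r + 1 = j') (w : F j) (w' : F j')
    (hw : castL (K := K) (F := F) hj w = w') : t r j h w = t r j' h' w' := by
  subst hj; subst hw; rfl

theorem dcast2 (W : Cochain K) {i i' j : ℤ} (hi : i = i') (h : i + 1 = j) (h' : i' + 1 = j)
    (x : W.X i) (x' : W.X i') (hx : castL (K := K) (F := W.X) hi x = x') :
    W.d i j h x = W.d i' j h' x' := by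
  subst hi; subst hx; rfl

theorem post_homD {V W : Cochain K} (U : Cochain K) (ψ : ∀ n : ℤ, W.X n →ₗ[K] V.X n)
    (hψ : ∀ (i j : ℤ) (h : i + 1 = j) (y : W.X i), ψ j (W.d i j h y) = V.d i j h (ψ i y))
    (m n : ℤ) (h : m + 1 = n) (y : HX U W m) :
    homD U V m n h (fun i => (ψ i.1.2).comp (y i))
      = fun i => (ψ i.1.2).comp (homD U W m n h y i) := by
  funext i
  ext u
  simp only [homD, LinearMap.sub_apply, LinearMap.comp_apply, LinearMap.smul_apply,
    map_sub, map_smul]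
  rw [hψ]

noncomputable def Bmap (U W : Cochain K) (b : ∀ i j : ℤ, i + 1 = j → (W.X j →ₗ[K] W.X i))
    (m n : ℤ) (h : m + 1 = n) (y : HX U W n) : HX U W m :=
  fun j => (b j.1.2 (j.1.2 + 1) rfl).comp (y ⟨(j.1.1, j.1.2 + 1), by have := j.2; omega⟩)

theorem Bmap_zero (U W : Cochain K) (b : ∀ i j : ℤ, i + 1 = j → (W.X j →ₗ[K] W.X i))
    (m n : ℤ) (h : m + 1 = n) : Bmap U W b m n h 0 = 0 := by
  funext j
  show (b j.1.2 (j.1.2 + 1) rfl).comp 0 = 0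
  simp

theorem homD_sub (U W : Cochain K) (m n : ℤ) (h : m + 1 = n) (x y : HX U W m) :
    homD U W m n h (x - y) = homD U W m n h x - homD U W m n h y := by
  funext i
  ext u
  simp only [homD, Pi.sub_apply, LinearMap.sub_apply, LinearMap.comp_apply,
    LinearMap.smul_apply, map_sub, smul_sub]
  abel

theorem homotopy_transfer (U W : Cochain K) (θ : ∀ n : ℤ, W.X n →ₗ[K] W.X n)
    (b : ∀ i j : ℤ, i + 1 = j → (W.X j →ₗ[K] W.X i))
    (hb : ∀ (i j k : ℤ) (hij : i + 1 = j) (hjk : j + 1 = k) (y : W.X j),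
      θ j y = y + W.d i j hij (b i j hij y) + b j k hjk (W.d j k hjk y))
    (n : ℤ) (y : HX U W n) :
    (fun i => (θ i.1.2).comp (y i)) =
      y + homD U W (n - 1) n (by omega) (Bmap U W b (n - 1) n (by omega) y)
        + Bmap U W b n (n + 1) rfl (homD U W n (n + 1) rfl y) := by
  funext i
  obtain ⟨⟨p, q⟩, hpq⟩ := i
  ext u
  simp only [homD, Bmap, Pi.add_apply, LinearMap.add_apply, LinearMap.sub_apply,
    LinearMap.comp_apply, LinearMap.smul_apply, map_sub, map_smul]
  -- align the shifted-index terms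
  rw [fam_cast b (show q - 1 + 1 = q by omega) rfl (show (q - 1) + 1 = q by omega) _ _
    (ycast y (show q - 1 + 1 = q by omega) (by omega) hpq u)]
  rw [dcast2 W (show q + 1 - 1 = q by omega) (by omega) rfl _ _
    (ycast y (show q + 1 - 1 = q by omega) (by omega) hpq u)]
  rw [hb (q - 1) q (q + 1) (by omega) rfl (y ⟨(p, q), hpq⟩ u)]
  have hsgn : (-1 : K) ^ (n - 1) = -(-1 : K) ^ n := by
    have : (-1 : K) ^ n = (-1 : K) ^ (n - 1) * (-1 : K) := by
      rw [← zpow_add_one₀ (by norm_num : (-1 : K) ≠ 0), sub_add_cancel]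
    rw [this]; ring
  rw [hsgn]
  simp only [neg_smul]
  abel
end HomLevel

/-- If `φ : V → V'` is a quasi-isomorphism of cochain complexes of `K`-vector
spaces and `U` is any cochain complex of `K`-vector spaces, then the induced
chain map `Hom(U, φ) : Hom(U, V) → Hom(U, V')` (postcomposition with `φ`) is a
quasi-isomorphism of Hom-complexes. -/
theorem hom_postcomposition_quasiIso {K : Type} [Field K] [CharZero K]
    {V V' : Cochain K} (U : Cochain K) (φ : ChainMap K V V')
    (hφ : IsQuasiIso φ) :
    (∀ (n : ℤ) (y : HX U V' n), homD U V' n (n + 1) rfl y = 0 →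
        ∃ (x : HX U V n) (z : HX U V' (n - 1)),
          homD U V n (n + 1) rfl x = 0 ∧
          homMapPost φ U n x = y + homD U V' (n - 1) n (by omega) z) ∧
    (∀ (n : ℤ) (x : HX U V n), homD U V n (n + 1) rfl x = 0 →
        (∃ z : HX U V' (n - 1), homMapPost φ U n x = homD U V' (n - 1) n (by omega) z) →
        ∃ u : HX U V (n - 1), x = homD U V (n - 1) n (by omega) u) := by
  obtain ⟨ψ, a, b, hcomm, hψφ, hφψ⟩ := exists_inverse_data φ hφ
  constructor
  · -- surjectivity on cohomology
    intro n y hy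
    refine ⟨fun i => (ψ i.1.2).comp (y i), Bmap U V' b (n - 1) n (by omega) y, ?_, ?_⟩
    · rw [post_homD U ψ hcomm n (n + 1) rfl y, hy]
      funext i
      show (ψ i.1.2).comp ((0 : HX U V' (n + 1)) i) = 0
      simp
    · have ht := homotopy_transfer U V' (fun m => (φ.f m).comp (ψ m)) b hφψ n y
      rw [hy, Bmap_zero, add_zero] at ht
      have hθ : homMapPost φ U n (fun i => (ψ i.1.2).comp (y i))
          = fun i => ((fun m => (φ.f m).comp (ψ m)) i.1.2).comp (y i) := rfl
      rw [hθ]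
      exact ht
  · -- injectivity on cohomology
    intro n x hx hex
    obtain ⟨z, hz⟩ := hex
    refine ⟨(fun i => (ψ i.1.2).comp (z i)) - Bmap U V a (n - 1) n (by omega) x, ?_⟩
    have ht := homotopy_transfer U V (fun m => (ψ m).comp (φ.f m)) a hψφ n x
    rw [hx, Bmap_zero, add_zero] at ht
    have hkey : (fun i => (ψ i.1.2).comp ((homMapPost φ U n x) i))
        = x + homD U V (n - 1) n (by omega) (Bmap U V a (n - 1) n (by omega) x) := ht
    have e2 : (fun i => (ψ i.1.2).comp ((homMapPost φ U n x) i))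
        = (fun i => (ψ i.1.2).comp ((homD U V' (n - 1) n (by omega) z) i)) := by rw [hz]
    have e3 : (fun i => (ψ i.1.2).comp ((homD U V' (n - 1) n (by omega) z) i))
        = homD U V (n - 1) n (by omega) (fun i => (ψ i.1.2).comp (z i)) :=
      (post_homD U ψ hcomm (n - 1) n (by omega) z).symm
    have e4 : x = homD U V (n - 1) n (by omega) (fun i => (ψ i.1.2).comp (z i))
        - homD U V (n - 1) n (by omega) (Bmap U V a (n - 1) n (by omega) x) := by
      rw [← e3, ← e2, hkey]
      abel
    conv_lhs => rw [e4]
    rw [← homD_sub]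
end Contraction
end
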